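/- arXiv:1703.05094 — 5 statements merged into one kernel-verified Lean document; each statement's English description precedes it below -/
import Mathlib

section
/- Let ψ be a positive, increasing, twice continuously differentiable solution of (1/2)σ²ψ'' + μψ' - rψ = 0 on (a,b) with σ > 0, and let g be twice continuously differentiable on (z,b) for some z ∈ (a,b). Suppose (G_r g)(x) := (1/2)σ²(x)g''(x) + μ(x)g'(x) - r g(x) is non-increasing and non-positive on (z,b), and (L_ψ g)(z+) = g(z)ψ'(z)/S'(z) - g'(z)ψ(z)/S'(z) ≤ 0. Then g'(x)/ψ'(x) is non-increasing on (z,b), and hence f̂(x) = g(x) - ψ(x)g'(x)/ψ'(x) is non-decreasing on (z,b). -/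
open Set Filter

/-- Lemma 5(B): if `G_r g` is non-increasing and non-positive on
`(z,b)` and `(L_ψ g)(z+) ≤ 0`, then `g'/ψ'` is non-increasing and
`f̂ = g - ψ g'/ψ'` is non-decreasing on `(z,b)`. -/
theorem repFun_monotone_of_generator
    (a b z r Lz : ℝ) (μ σ S' ψ ψ' ψ'' g g' g'' : ℝ → ℝ)
    (hr : 0 < r) (hz : z ∈ Ioo a b)
    (hσpos : ∀ x ∈ Ioo a b, 0 < σ x)
    (hμc : ContinuousOn μ (Ioo a b)) (hσc : ContinuousOn σ (Ioo a b))
    (hS'pos : ∀ x ∈ Ioo a b, 0 < S' x)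
    (hS' : ∀ x ∈ Ioo a b, HasDerivAt S' (-(2 * μ x / σ x ^ 2) * S' x) x)
    (hψpos : ∀ x ∈ Ioo a b, 0 < ψ x)
    (hψ : ∀ x ∈ Ioo a b, HasDerivAt ψ (ψ' x) x)
    (hψ'pos : ∀ x ∈ Ioo a b, 0 < ψ' x)
    (hψ' : ∀ x ∈ Ioo a b, HasDerivAt ψ' (ψ'' x) x)
    (hψ''c : ContinuousOn ψ'' (Ioo a b))
    (hψharm : ∀ x ∈ Ioo a b,
      (1 / 2) * σ x ^ 2 * ψ'' x + μ x * ψ' x - r * ψ x = 0)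
    (hg : ∀ x ∈ Ioo z b, HasDerivAt g (g' x) x)
    (hg' : ∀ x ∈ Ioo z b, HasDerivAt g' (g'' x) x)
    (hg''c : ContinuousOn g'' (Ioo z b))
    (hGanti : AntitoneOn
      (fun x => (1 / 2) * σ x ^ 2 * g'' x + μ x * g' x - r * g x) (Ioo z b))
    (hGnonpos : ∀ x ∈ Ioo z b,
      (1 / 2) * σ x ^ 2 * g'' x + μ x * g' x - r * g x ≤ 0)
    (hLlim : Tendsto (fun x => (g x * ψ' x - g' x * ψ x) / S' x)
      (nhdsWithin z (Ioi z)) (nhds Lz))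
    (hLz : Lz ≤ 0) :
    AntitoneOn (fun x => g' x / ψ' x) (Ioo z b) ∧
      MonotoneOn (fun x => g x - ψ x * g' x / ψ' x) (Ioo z b) := by
  obtain ⟨haz, hzb⟩ := hz
  have hzab : z ∈ Ioo a b := ⟨haz, hzb⟩
  have hsub : Ioo z b ⊆ Ioo a b := fun x hx => ⟨haz.trans hx.1, hx.2⟩
  set G : ℝ → ℝ := fun x => (1 / 2) * σ x ^ 2 * g'' x + μ x * g' x - r * g x with hGdef
  have hσne : ∀ x ∈ Ioo a b, σ x ≠ 0 := fun x hx => (hσpos x hx).ne'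
  have hS'ne : ∀ x ∈ Ioo a b, S' x ≠ 0 := fun x hx => (hS'pos x hx).ne'
  have hψ'ne : ∀ x ∈ Ioo a b, ψ' x ≠ 0 := fun x hx => (hψ'pos x hx).ne'
  have hψ''eq : ∀ x ∈ Ioo a b, ψ'' x = 2 / σ x ^ 2 * (r * ψ x - μ x * ψ' x) := by
    intro x hx
    have h := hψharm x hx
    have hσ := hσne x hx
    field_simp
    nlinarith [h]
  have hg''eq : ∀ x ∈ Ioo z b, g'' x = 2 / σ x ^ 2 * (G x - μ x * g' x + r * g x) := by
    intro x hx
    have hσ := hσne x (hsub hx)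
    simp only [hGdef]
    field_simp
    ring
  set L : ℝ → ℝ := fun y => (g y * ψ' y - g' y * ψ y) / S' y with hLdef
  set Q : ℝ → ℝ := fun y => ψ' y / S' y with hQdef
  -- derivative of Q on Ioo a b
  have hQd : ∀ x ∈ Ioo a b, HasDerivAt Q (2 * r * ψ x / (σ x ^ 2 * S' x)) x := by
    intro x hx
    have h := (hψ' x hx).div (hS' x hx) (hS'ne x hx)
    refine h.congr_deriv ?_
    rw [hψ''eq x hx]
    have h1 := hσne x hx
    have h2 := hS'ne x hx
    field_simp
    ring
  -- derivative of L on Ioo z b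
  have hLd : ∀ x ∈ Ioo z b, HasDerivAt L (-(2 * G x * ψ x / (σ x ^ 2 * S' x))) x := by
    intro x hx
    have hx' := hsub hx
    have h1 : HasDerivAt (fun y => g y * ψ' y - g' y * ψ y)
        (g' x * ψ' x + g x * ψ'' x - (g'' x * ψ x + g' x * ψ' x)) x :=
      ((hg x hx).mul (hψ' x hx')).sub ((hg' x hx).mul (hψ x hx'))
    have h2 := h1.div (hS' x hx') (hS'ne x hx')
    refine h2.congr_deriv ?_
    rw [hψ''eq x hx', hg''eq x hx]
    have hσ := hσne x hx'
    have hS := hS'ne x hx'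
    field_simp
    ring
  -- key inequality: D x = G x * Q x + r * L x ≤ 0 on Ioo z b
  have hD : ∀ x ∈ Ioo z b, G x * Q x + r * L x ≤ 0 := by
    intro x hx
    set F : ℝ → ℝ := fun v => G x * Q v + r * L v with hFdef
    have hFd : ∀ v ∈ Ioo z b, HasDerivAt F
        (G x * (2 * r * ψ v / (σ v ^ 2 * S' v)) + r * -(2 * G v * ψ v / (σ v ^ 2 * S' v))) v :=
      fun v hv => ((hQd v (hsub hv)).const_mul (G x)).add ((hLd v hv).const_mul r)
    have hIoc : Ioc z x ⊆ Ioo z b := fun v hv => ⟨hv.1, lt_of_le_of_lt hv.2 hx.2⟩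
    have hFanti : AntitoneOn F (Ioc z x) := by
      apply antitoneOn_of_deriv_nonpos (convex_Ioc z x)
      · exact fun v hv => (hFd v (hIoc hv)).continuousAt.continuousWithinAt
      · intro v hv
        rw [interior_Ioc] at hv
        exact ((hFd v (hIoc ⟨hv.1, hv.2.le⟩)).differentiableAt.differentiableWithinAt)
      · intro v hv
        rw [interior_Ioc] at hv
        have hv' : v ∈ Ioo z b := hIoc ⟨hv.1, hv.2.le⟩
        rw [(hFd v hv').deriv]
        have heq : G x * (2 * r * ψ v / (σ v ^ 2 * S' v)) + r * -(2 * G v * ψ v / (σ v ^ 2 * S' v))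
            = 2 * r * ψ v / (σ v ^ 2 * S' v) * (G x - G v) := by ring
        rw [heq]
        have hpos : 0 < 2 * r * ψ v / (σ v ^ 2 * S' v) := by
          have := hψpos v (hsub hv'); have := hσpos v (hsub hv'); have := hS'pos v (hsub hv')
          positivity
        have hGle : G x ≤ G v := hGanti hv' hx hv.2.le
        exact mul_nonpos_of_nonneg_of_nonpos hpos.le (by linarith)
    have hQt : Tendsto Q (nhdsWithin z (Ioi z)) (nhds (Q z)) :=
      ((hQd z hzab).continuousAt.continuousWithinAt : ContinuousWithinAt Q (Ioi z) z)
    have hFt : Tendsto F (nhdsWithin z (Ioi z)) (nhds (G x * Q z + r * Lz)) :=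
      (hQt.const_mul (G x)).add (hLlim.const_mul r)
    have hFx_le : F x ≤ G x * Q z + r * Lz := by
      refine ge_of_tendsto hFt ?_
      filter_upwards [Ioo_mem_nhdsGT_of_mem (show z ∈ Ico z x from ⟨le_refl z, hx.1⟩)] with v hv
      exact hFanti ⟨hv.1, hv.2.le⟩ ⟨hx.1, le_refl x⟩ hv.2.le
    have hGx : G x ≤ 0 := hGnonpos x hx
    have hQz : 0 < Q z := div_pos (hψ'pos z hzab) (hS'pos z hzab)
    have h1 : G x * Q z ≤ 0 := mul_nonpos_of_nonpos_of_nonneg hGx hQz.le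
    have h2 : r * Lz ≤ 0 := mul_nonpos_of_nonneg_of_nonpos hr.le hLz
    calc G x * Q x + r * L x = F x := rfl
      _ ≤ G x * Q z + r * Lz := hFx_le
      _ ≤ 0 := by linarith
  -- derivative of R = g'/ψ'
  have hRd : ∀ x ∈ Ioo z b, HasDerivAt (fun y => g' y / ψ' y)
      ((g'' x * ψ' x - g' x * ψ'' x) / ψ' x ^ 2) x :=
    fun x hx => (hg' x hx).div (hψ' x (hsub hx)) (hψ'ne x (hsub hx))
  have hRle : ∀ x ∈ Ioo z b, (g'' x * ψ' x - g' x * ψ'' x) / ψ' x ^ 2 ≤ 0 := by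
    intro x hx
    have hx' := hsub hx
    have heq : (g'' x * ψ' x - g' x * ψ'' x) / ψ' x ^ 2
        = 2 * S' x / (σ x ^ 2 * ψ' x ^ 2) * (G x * Q x + r * L x) := by
      rw [hψ''eq x hx', hg''eq x hx]
      simp only [hQdef, hLdef]
      have hσ := hσne x hx'
      have hS := hS'ne x hx'
      have hψ'n := hψ'ne x hx'
      field_simp
      ring
    rw [heq]
    have hpos : 0 < 2 * S' x / (σ x ^ 2 * ψ' x ^ 2) := by
      have := hS'pos x hx'; have := hσpos x hx'; have := hψ'pos x hx'
      positivity
    exact mul_nonpos_of_nonneg_of_nonpos hpos.le (hD x hx)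
  constructor
  · apply antitoneOn_of_deriv_nonpos (convex_Ioo z b)
    · exact fun x hx => (hRd x hx).continuousAt.continuousWithinAt
    · intro x hx
      rw [interior_Ioo] at hx
      exact (hRd x hx).differentiableAt.differentiableWithinAt
    · intro x hx
      rw [interior_Ioo] at hx
      rw [(hRd x hx).deriv]
      exact hRle x hx
  · apply monotoneOn_of_deriv_nonneg (convex_Ioo z b)
    · intro x hx
      exact (((hg x hx).sub (((hψ x (hsub hx)).mul (hg' x hx)).div (hψ' x (hsub hx))
        (hψ'ne x (hsub hx)))).continuousAt).continuousWithinAt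
    · intro x hx
      rw [interior_Ioo] at hx
      exact (((hg x hx).sub (((hψ x (hsub hx)).mul (hg' x hx)).div (hψ' x (hsub hx))
        (hψ'ne x (hsub hx)))).differentiableAt).differentiableWithinAt
    · intro x hx
      rw [interior_Ioo] at hx
      have hx' := hsub hx
      have hFd : HasDerivAt (fun y => g y - ψ y * g' y / ψ' y)
          (g' x - ((ψ' x * g' x + ψ x * g'' x) * ψ' x - ψ x * g' x * ψ'' x) / ψ' x ^ 2) x :=
        (hg x hx).sub (((hψ x hx').mul (hg' x hx)).div (hψ' x hx') (hψ'ne x hx'))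
      rw [hFd.deriv]
      have heq : g' x - ((ψ' x * g' x + ψ x * g'' x) * ψ' x - ψ x * g' x * ψ'' x) / ψ' x ^ 2
          = -ψ x * ((g'' x * ψ' x - g' x * ψ'' x) / ψ' x ^ 2) := by
        have hψ'n := hψ'ne x hx'
        field_simp
        ring
      rw [heq]
      have h1 := hRle x hx
      have h2 := hψpos x hx'
      nlinarith
end

section
/- Let ψ be a positive, increasing, twice continuously differentiable r-harmonic function on (a,b) (i.e. (1/2)σ²ψ'' + μψ' = rψ) and g twice continuously differentiable. Then wherever g and ψ are twice differentiable, d/dx(g'(x)/ψ'(x)) = (2S'(x)/(σ²(x)ψ'(x)²)) · [ (G_r g)(x)·ψ'(x)/S'(x) + r·(L_ψ g)(x) ], where (G_r g) = (1/2)σ²g'' + μg' - rg, (L_ψ g)(x) = (g(x)ψ'(x) - g'(x)ψ(x))/S'(x), and S' is the scale density. -/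
open Set

/-- the key differentiation identity
`d/dx (g'/ψ') = (2S'/(σ²ψ'²)) [ (G_r g) ψ'/S' + r (L_ψ g) ]`. -/
theorem deriv_ratio_identity
    (a b r : ℝ) (μ σ S' ψ ψ' ψ'' g g' g'' : ℝ → ℝ)
    (hr : 0 < r)
    (hσpos : ∀ x ∈ Ioo a b, 0 < σ x)
    (hμc : ContinuousOn μ (Ioo a b)) (hσc : ContinuousOn σ (Ioo a b))
    (hS'pos : ∀ x ∈ Ioo a b, 0 < S' x)
    (hS' : ∀ x ∈ Ioo a b, HasDerivAt S' (-(2 * μ x / σ x ^ 2) * S' x) x)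
    (hψpos : ∀ x ∈ Ioo a b, 0 < ψ x)
    (hψ : ∀ x ∈ Ioo a b, HasDerivAt ψ (ψ' x) x)
    (hψ'pos : ∀ x ∈ Ioo a b, 0 < ψ' x)
    (hψ' : ∀ x ∈ Ioo a b, HasDerivAt ψ' (ψ'' x) x)
    (hψharm : ∀ x ∈ Ioo a b,
      (1 / 2) * σ x ^ 2 * ψ'' x + μ x * ψ' x = r * ψ x)
    (hg : ∀ x ∈ Ioo a b, HasDerivAt g (g' x) x)
    (hg' : ∀ x ∈ Ioo a b, HasDerivAt g' (g'' x) x) :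
    ∀ x ∈ Ioo a b,
      HasDerivAt (fun y => g' y / ψ' y)
        (2 * S' x / (σ x ^ 2 * ψ' x ^ 2) *
          (((1 / 2) * σ x ^ 2 * g'' x + μ x * g' x - r * g x) * ψ' x / S' x +
            r * ((g x * ψ' x - g' x * ψ x) / S' x))) x := by
  intro x hx
  have hψ'ne := (hψ'pos x hx).ne'
  have hσne := (hσpos x hx).ne'
  have hS'ne := (hS'pos x hx).ne'
  have h : HasDerivAt (fun y => g' y / ψ' y) _ x := (hg' x hx).div (hψ' x hx) hψ'ne
  convert h using 1
  have harm := hψharm x hx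
  field_simp
  linear_combination (2 * g' x) * harm
end

section
/- Let π : (a,b) → ℝ be continuous with π(x) < 0 for x < x₀, π(x₀) = 0, π(x) > 0 for x > x₀, and π nondecreasing on (x₀,b). Let ψ be positive, increasing, twice continuously differentiable, r-harmonic (so that (ψ'/S')'(x) = rψ(x)m'(x)), with S', m' the scale and speed densities. Suppose y* > x₀ satisfies ∫_a^{y*} ψ(t)π(t)m'(t)dt = 0. Then the function f̂(x) = (S'(x)/ψ'(x)) ∫_a^x ψ(t)π(t)m'(t)dt is non-decreasing on (y*,b). -/
open Set

/-- optimal entry: with `π` nondecreasing on `(x₀,b)` and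
`∫_a^{y*} ψ π m' = 0`, the representing function
`f̂(x) = (S'(x)/ψ'(x)) ∫_a^x ψ π m'` is non-decreasing on `(y*,b)`. -/
theorem optimal_entry_repFun_monotone
    (a b r x₀ ystar : ℝ) (μ σ S' m' ψ ψ' ψ'' π F : ℝ → ℝ)
    (hr : 0 < r) (hx₀ : x₀ ∈ Ioo a b) (hystar : ystar ∈ Ioo x₀ b)
    (hσpos : ∀ x ∈ Ioo a b, 0 < σ x)
    (hS'pos : ∀ x ∈ Ioo a b, 0 < S' x)
    (hS' : ∀ x ∈ Ioo a b, HasDerivAt S' (-(2 * μ x / σ x ^ 2) * S' x) x)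
    (hm' : ∀ x ∈ Ioo a b, m' x = 2 / (σ x ^ 2 * S' x))
    (hψpos : ∀ x ∈ Ioo a b, 0 < ψ x)
    (hψ : ∀ x ∈ Ioo a b, HasDerivAt ψ (ψ' x) x)
    (hψ'pos : ∀ x ∈ Ioo a b, 0 < ψ' x)
    (hψ' : ∀ x ∈ Ioo a b, HasDerivAt ψ' (ψ'' x) x)
    (hψ''c : ContinuousOn ψ'' (Ioo a b))
    (hharm : ∀ x ∈ Ioo a b,
      HasDerivAt (fun y => ψ' y / S' y) (r * ψ x * m' x) x)
    (hπc : ContinuousOn π (Ioo a b))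
    (hπneg : ∀ x ∈ Ioo a x₀, π x < 0)
    (hπ0 : π x₀ = 0)
    (hπpos : ∀ x ∈ Ioo x₀ b, 0 < π x)
    (hπmono : MonotoneOn π (Ioo x₀ b))
    -- `F(x) = ∫_a^x ψ(t) π(t) m'(t) dt`:
    (hF : ∀ x ∈ Ioo a b, HasDerivAt F (ψ x * π x * m' x) x)
    (hFystar : F ystar = 0) :
    MonotoneOn (fun x => S' x / ψ' x * F x) (Ioo ystar b) := by
  obtain ⟨hax₀, hx₀b⟩ := hx₀
  obtain ⟨hx₀y, hyb⟩ := hystar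
  have hsub : Ioo ystar b ⊆ Ioo a b := by
    intro x hx; exact ⟨lt_trans (lt_trans hax₀ hx₀y) hx.1, hx.2⟩
  have hsub₀ : Ioo ystar b ⊆ Ioo x₀ b := by
    intro x hx; exact ⟨lt_trans hx₀y hx.1, hx.2⟩
  have hyab : ystar ∈ Ioo a b := ⟨lt_trans hax₀ hx₀y, hyb⟩
  set h : ℝ → ℝ := fun y => ψ' y / S' y with hh
  have hm'pos : ∀ x ∈ Ioo a b, 0 < m' x := by
    intro x hx
    rw [hm' x hx]
    have := hσpos x hx
    have := hS'pos x hx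
    positivity
  have hhpos : ∀ x ∈ Ioo a b, 0 < h x := fun x hx =>
    div_pos (hψ'pos x hx) (hS'pos x hx)
  -- key bound: r * F x ≤ π x * (h x - h ystar) for x ∈ Ioo ystar b
  have key : ∀ x ∈ Ioo ystar b, r * F x ≤ π x * (h x - h ystar) := by
    intro x hx
    have hxab := hsub hx
    set G : ℝ → ℝ := fun y => π x * h y - r * F y with hG
    have hIcc : Icc ystar x ⊆ Ioo a b := by
      intro y hy
      exact ⟨lt_of_lt_of_le (lt_trans hax₀ hx₀y) hy.1, lt_of_le_of_lt hy.2 hx.2⟩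
    have hGd : ∀ y ∈ Ioo a b,
        HasDerivAt G (π x * (r * ψ y * m' y) - r * (ψ y * π y * m' y)) y := by
      intro y hy
      exact ((hharm y hy).const_mul (π x)).sub ((hF y hy).const_mul r)
    have hmono : MonotoneOn G (Icc ystar x) := by
      apply monotoneOn_of_deriv_nonneg (convex_Icc _ _)
      · intro y hy
        exact ((hGd y (hIcc hy)).differentiableAt.continuousAt).continuousWithinAt
      · intro y hy
        rw [interior_Icc] at hy
        exact ((hGd y (hIcc (Ioo_subset_Icc_self hy))).differentiableAt).differentiableWithinAt
      · intro y hy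
        rw [interior_Icc] at hy
        have hyab' : y ∈ Ioo a b := hIcc (Ioo_subset_Icc_self hy)
        rw [(hGd y hyab').deriv]
        have hπle : π y ≤ π x := hπmono ⟨lt_trans hx₀y hy.1, hyab'.2⟩ (hsub₀ hx) (le_of_lt hy.2)
        have h1 : 0 < ψ y := hψpos y hyab'
        have h2 : 0 < m' y := hm'pos y hyab'
        have heq : π x * (r * ψ y * m' y) - r * (ψ y * π y * m' y)
            = r * ψ y * m' y * (π x - π y) := by ring
        rw [heq]
        have : 0 ≤ π x - π y := by linarith
        positivity
    have hyx : ystar ≤ x := le_of_lt hx.1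
    have := hmono (left_mem_Icc.mpr hyx) (right_mem_Icc.mpr hyx) hyx
    simp only [hG, hFystar, mul_zero, sub_zero] at this
    linarith
  -- main monotonicity
  have hd : ∀ x ∈ Ioo ystar b,
      HasDerivAt (fun y => S' y / ψ' y * F y)
        ((ψ x * π x * m' x * h x - F x * (r * ψ x * m' x)) / h x ^ 2) x := by
    intro x hx
    have hxab := hsub hx
    have hdiv : HasDerivAt (fun y => F y / h y)
        ((ψ x * π x * m' x * h x - F x * (r * ψ x * m' x)) / h x ^ 2) x :=
      (hF x hxab).div (hharm x hxab) (ne_of_gt (hhpos x hxab))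
    refine hdiv.congr_of_eventuallyEq ?_
    filter_upwards [isOpen_Ioo.mem_nhds hxab] with y hy
    have hS'ne : S' y ≠ 0 := ne_of_gt (hS'pos y hy)
    have hψ'ne : ψ' y ≠ 0 := ne_of_gt (hψ'pos y hy)
    simp only [hh]
    field_simp
  apply monotoneOn_of_deriv_nonneg (convex_Ioo _ _)
  · intro x hx
    exact ((hd x hx).differentiableAt.continuousAt).continuousWithinAt
  · intro x hx
    rw [interior_Ioo] at hx
    exact (hd x hx).differentiableAt.differentiableWithinAt
  · intro x hx
    rw [interior_Ioo] at hx
    rw [(hd x hx).deriv]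
    have hxab := hsub hx
    have hkey := key x hx
    have hπx : 0 < π x := hπpos x (hsub₀ hx)
    have h1 : 0 < ψ x := hψpos x hxab
    have h2 : 0 < m' x := hm'pos x hxab
    have h3 : 0 < h x := hhpos x hxab
    have h4 : 0 < h ystar := hhpos ystar hyab
    apply div_nonneg _ (sq_nonneg _)
    have h5 : 0 ≤ π x * h x - r * F x := by nlinarith
    have heq : ψ x * π x * m' x * h x - F x * (r * ψ x * m' x)
        = ψ x * m' x * (π x * h x - r * F x) := by ring
    rw [heq]
    positivity
end

section
/- Let ψ be positive, increasing, twice continuously differentiable and r-harmonic on (a,b) with speed density m' and scale density S', and assume ψ'(x)/S'(x) → ∞ as x → b. Let π be continuous with π bounded below by ε > 0 near b and ∫_a^{x₀}ψπm' finite and negative for some x₀. Then the function F(x) = ∫_a^x ψ(t)π(t)m'(t)dt tends to +∞ as x → b, and hence (since F is continuous, negative at some point, and strictly increasing where π > 0) the equation F(x) = 0 has a root y* in (x₀, b). -/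
open Set Filter

/-- optimal entry, existence of the root: if `ψ'/S' → ∞` at `b`
and `π ≥ ε > 0` near `b`, then `F(x) = ∫_a^x ψ π m'` tends to `+∞` at `b` and
the equation `F(x) = 0` has a root `y* ∈ (x₀,b)`. -/
theorem optimal_entry_root_exists
    (a b r x₀ c ε : ℝ) (μ σ S' m' ψ ψ' ψ'' π F : ℝ → ℝ)
    (hr : 0 < r) (hx₀ : x₀ ∈ Ioo a b) (hc : c ∈ Ioo a b) (hε : 0 < ε)
    (hσpos : ∀ x ∈ Ioo a b, 0 < σ x)
    (hS'pos : ∀ x ∈ Ioo a b, 0 < S' x)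
    (hS' : ∀ x ∈ Ioo a b, HasDerivAt S' (-(2 * μ x / σ x ^ 2) * S' x) x)
    (hm' : ∀ x ∈ Ioo a b, m' x = 2 / (σ x ^ 2 * S' x))
    (hψpos : ∀ x ∈ Ioo a b, 0 < ψ x)
    (hψ : ∀ x ∈ Ioo a b, HasDerivAt ψ (ψ' x) x)
    (hψ'pos : ∀ x ∈ Ioo a b, 0 < ψ' x)
    (hψ' : ∀ x ∈ Ioo a b, HasDerivAt ψ' (ψ'' x) x)
    (hψ''c : ContinuousOn ψ'' (Ioo a b))
    (hharm : ∀ x ∈ Ioo a b,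
      HasDerivAt (fun y => ψ' y / S' y) (r * ψ x * m' x) x)
    (hunatt : Tendsto (fun x => ψ' x / S' x) (nhdsWithin b (Iio b)) atTop)
    (hπc : ContinuousOn π (Ioo a b))
    (hπneg : ∀ x ∈ Ioo a x₀, π x < 0)
    (hπpos : ∀ x ∈ Ioo x₀ b, 0 < π x)
    (hπε : ∀ x ∈ Ioo c b, ε ≤ π x)
    -- `F(x) = ∫_a^x ψ(t) π(t) m'(t) dt`, finite and negative at `x₀`:
    (hF : ∀ x ∈ Ioo a b, HasDerivAt F (ψ x * π x * m' x) x)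
    (hFx₀ : F x₀ < 0) :
    Tendsto F (nhdsWithin b (Iio b)) atTop ∧
    ∃ ystar ∈ Ioo x₀ b, F ystar = 0 := by

  obtain ⟨hax₀, hx₀b⟩ := hx₀
  obtain ⟨hac, hcb⟩ := hc
  set d := max x₀ c with hd
  have had : a < d := lt_of_lt_of_le hax₀ (le_max_left _ _)
  have hdb : d < b := max_lt hx₀b hcb
  have hm'pos : ∀ x ∈ Ioo a b, 0 < m' x := fun x hx => by
    rw [hm' x hx]
    exact div_pos two_pos (mul_pos (pow_pos (hσpos x hx) 2) (hS'pos x hx))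
  set G : ℝ → ℝ := fun x => F x - ε / r * (ψ' x / S' x) with hGdef
  have hG : ∀ x ∈ Ioo a b, HasDerivAt G (ψ x * π x * m' x - ε / r * (r * ψ x * m' x)) x :=
    fun x hx => (hF x hx).sub ((hharm x hx).const_mul (ε / r))
  have hIcosub : Ico d b ⊆ Ioo a b := fun x hx => ⟨lt_of_lt_of_le had hx.1, hx.2⟩
  have hGmono : MonotoneOn G (Ico d b) := by
    have hconv : Convex ℝ (Ico d b) := convex_Ico d b
    refine monotoneOn_of_deriv_nonneg hconv ?_ ?_ ?_
    · exact fun x hx => ((hG x (hIcosub hx)).continuousAt).continuousWithinAt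
    · rw [interior_Ico]
      exact fun x hx => ((hG x (hIcosub (Ioo_subset_Ico_self hx))).differentiableAt).differentiableWithinAt
    · rw [interior_Ico]
      intro x hx
      have hxab : x ∈ Ioo a b := hIcosub (Ioo_subset_Ico_self hx)
      rw [(hG x hxab).deriv]
      have hπx : ε ≤ π x := hπε x ⟨lt_of_le_of_lt (le_max_right x₀ c) hx.1, hx.2⟩
      have hψm : 0 < ψ x * m' x := mul_pos (hψpos x hxab) (hm'pos x hxab)
      have : ψ x * π x * m' x - ε / r * (r * ψ x * m' x)
          = (π x - ε) * (ψ x * m' x) := by field_simp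
      rw [this]
      exact mul_nonneg (sub_nonneg.mpr hπx) hψm.le
  have hεr : 0 < ε / r := div_pos hε hr
  have hlower : ∀ᶠ x in nhdsWithin b (Iio b), G d + ε / r * (ψ' x / S' x) ≤ F x := by
    filter_upwards [Ioo_mem_nhdsLT_of_mem (⟨hdb, le_refl b⟩ : b ∈ Ioc d b)] with x hx
    have hGd : G d ≤ G x := hGmono ⟨le_refl d, hdb⟩ ⟨hx.1.le, hx.2⟩ hx.1.le
    have hEq : G x + ε / r * (ψ' x / S' x) = F x := by simp [hGdef]
    calc G d + ε / r * (ψ' x / S' x) ≤ G x + ε / r * (ψ' x / S' x) := add_le_add_left hGd _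
      _ = F x := hEq
  have htend : Tendsto F (nhdsWithin b (Iio b)) atTop := by
    refine tendsto_atTop_mono' _ hlower ?_
    exact tendsto_atTop_add_const_left _ _ (hunatt.const_mul_atTop hεr)
  refine ⟨htend, ?_⟩
  have hx₂ : ∃ x₂, x₂ ∈ Ioo x₀ b ∧ 0 < F x₂ := by
    have h1 : ∀ᶠ x in nhdsWithin b (Iio b), 0 < F x := htend.eventually_gt_atTop 0
    have h2 : Ioo x₀ b ∈ nhdsWithin b (Iio b) :=
      Ioo_mem_nhdsLT_of_mem ⟨hx₀b, le_refl b⟩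
    exact ((eventually_and.2 ⟨h2, h1⟩).exists)
  obtain ⟨x₂, hx₂mem, hFx₂⟩ := hx₂
  have hsub : Icc x₀ x₂ ⊆ Ioo a b := fun x hx =>
    ⟨lt_of_lt_of_le hax₀ hx.1, lt_of_le_of_lt hx.2 hx₂mem.2⟩
  have hFcont : ContinuousOn F (Icc x₀ x₂) := fun x hx =>
    ((hF x (hsub hx)).continuousAt).continuousWithinAt
  have hIVT := intermediate_value_Ioo hx₂mem.1.le hFcont
  have h0 : (0 : ℝ) ∈ Ioo (F x₀) (F x₂) := ⟨hFx₀, hFx₂⟩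
  obtain ⟨ystar, hymem, hy⟩ := hIVT h0
  exact ⟨ystar, ⟨hymem.1, lt_trans hymem.2 hx₂mem.2⟩, hy⟩
end

section
/- Let ψ be a positive, increasing, twice continuously differentiable r-harmonic function on (a,b) with scale density S' and speed density m', and let g be twice continuously differentiable with (G_r g) ∈ C ∩ L¹ and lim_{x↓a}(L_ψ g)(x) = 0. Then for all x ∈ (a,b), f̂(x) := g(x) - ψ(x)g'(x)/ψ'(x) = -(S'(x)/ψ'(x)) ∫_a^x (G_r g)(v) ψ(v) m'(v) dv. -/
open Set Filter MeasureTheory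

/-- the integral representation
`f̂(x) = -(S'(x)/ψ'(x)) ∫_a^x (G_r g)(v) ψ(v) m'(v) dv`
when `(L_ψ g)(a+) = 0`. -/
theorem repFun_integral_representation
    (a b r : ℝ) (μ σ S' m' ψ ψ' ψ'' g g' g'' : ℝ → ℝ)
    (hr : 0 < r)
    (hσpos : ∀ x ∈ Ioo a b, 0 < σ x)
    (hμc : ContinuousOn μ (Ioo a b)) (hσc : ContinuousOn σ (Ioo a b))
    (hS'pos : ∀ x ∈ Ioo a b, 0 < S' x)
    (hS' : ∀ x ∈ Ioo a b, HasDerivAt S' (-(2 * μ x / σ x ^ 2) * S' x) x)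
    (hm' : ∀ x ∈ Ioo a b, m' x = 2 / (σ x ^ 2 * S' x))
    (hψpos : ∀ x ∈ Ioo a b, 0 < ψ x)
    (hψ : ∀ x ∈ Ioo a b, HasDerivAt ψ (ψ' x) x)
    (hψ'pos : ∀ x ∈ Ioo a b, 0 < ψ' x)
    (hψ' : ∀ x ∈ Ioo a b, HasDerivAt ψ' (ψ'' x) x)
    (hψharm : ∀ x ∈ Ioo a b,
      (1 / 2) * σ x ^ 2 * ψ'' x + μ x * ψ' x - r * ψ x = 0)
    (hg : ∀ x ∈ Ioo a b, HasDerivAt g (g' x) x)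
    (hg' : ∀ x ∈ Ioo a b, HasDerivAt g' (g'' x) x)
    (Gg : ℝ → ℝ)
    (hGg : ∀ x ∈ Ioo a b,
      Gg x = (1 / 2) * σ x ^ 2 * g'' x + μ x * g' x - r * g x)
    (hGgc : ContinuousOn Gg (Ioo a b))
    (hGgint : IntegrableOn (fun v => Gg v * ψ v * m' v) (Ioo a b))
    (hLlim : Tendsto (fun x => (g x * ψ' x - g' x * ψ x) / S' x)
      (nhdsWithin a (Ioi a)) (nhds 0)) :
    ∀ x ∈ Ioo a b,
      g x - ψ x * g' x / ψ' x =
        -(S' x / ψ' x) * ∫ v in Ioo a x, Gg v * ψ v * m' v := by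
  intro x hx
  obtain ⟨hax, hxb⟩ := hx
  set F : ℝ → ℝ := fun v => Gg v * ψ v * m' v with hF
  set L : ℝ → ℝ := fun t => (g t * ψ' t - g' t * ψ t) / S' t with hLdef
  -- derivative of L
  have hLderiv : ∀ t ∈ Ioo a b, HasDerivAt L (-(F t)) t := by
    intro t ht
    have hσ := hσpos t ht
    have hS := hS'pos t ht
    have h1 : HasDerivAt (fun t => g t * ψ' t - g' t * ψ t)
        ((g' t * ψ' t + g t * ψ'' t) - (g'' t * ψ t + g' t * ψ' t)) t :=
      ((hg t ht).mul (hψ' t ht)).sub ((hg' t ht).mul (hψ t ht))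
    have h2 := h1.div (hS' t ht) (ne_of_gt hS)
    refine h2.congr_deriv ?_
    have hσ2 : σ t ^ 2 ≠ 0 := by positivity
    have hψ2 : ψ'' t = (r * ψ t - μ t * ψ' t) * 2 / σ t ^ 2 := by
      have h := hψharm t ht
      field_simp
      linarith
    have hg2 : g'' t = (Gg t + r * g t - μ t * g' t) * 2 / σ t ^ 2 := by
      have h := hGg t ht
      field_simp
      linarith
    rw [hF]
    simp only
    rw [hm' t ht, hψ2, hg2]
    field_simp
    ring
  have hIoc : Ioc a x ⊆ Ioo a b := fun v hv => ⟨hv.1, lt_of_le_of_lt hv.2 hxb⟩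
  have hFint : IntegrableOn F (Ioc a x) := hGgint.mono_set hIoc
  -- FTC on [y, x] for y ∈ (a, x)
  have hkey : ∀ y ∈ Ioo a x, L y = L x + ∫ v in y..x, F v := by
    intro y hy
    have hIcc : Icc y x ⊆ Ioo a b := fun v hv =>
      ⟨lt_of_lt_of_le hy.1 hv.1, lt_of_le_of_lt hv.2 hxb⟩
    have hd : ∀ t ∈ uIcc y x, HasDerivAt L (-(F t)) t := by
      intro t ht
      rw [uIcc_of_le hy.2.le] at ht
      exact hLderiv t (hIcc ht)
    have hint : IntervalIntegrable (fun t => -(F t)) volume y x := by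
      apply MeasureTheory.IntegrableOn.intervalIntegrable
      rw [uIcc_of_le hy.2.le]
      exact (hGgint.mono_set hIcc).neg
    have h3 := intervalIntegral.integral_eq_sub_of_hasDerivAt hd hint
    rw [intervalIntegral.integral_neg] at h3
    linarith
  -- limit of the primitive as y → a⁺
  have hii : IntervalIntegrable F volume a x := by
    rw [intervalIntegrable_iff_integrableOn_Ioc_of_le hax.le]
    exact hFint
  have hcw : ContinuousWithinAt (fun y => ∫ v in x..y, F v) (Icc a x) a := by
    apply intervalIntegral.continuousWithinAt_primitive (by simp)
    rw [min_eq_right hax.le, max_self]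
    exact hii
  have htend2 : Tendsto (fun y => ∫ v in y..x, F v) (nhdsWithin a (Ioi a))
      (nhds (∫ v in Ioc a x, F v)) := by
    have h4 : Tendsto (fun y => ∫ v in x..y, F v) (nhdsWithin a (Ioi a))
        (nhds (∫ v in x..a, F v)) := by
      apply hcw.tendsto.mono_left
      apply nhdsWithin_le_of_mem
      apply mem_nhdsWithin.2
      exact ⟨Iio x, isOpen_Iio, hax, fun z hz => ⟨hz.2.le, hz.1.le⟩⟩
    have h5 : (fun y => ∫ v in y..x, F v) = fun y => -∫ v in x..y, F v := by
      funext y; rw [intervalIntegral.integral_symm]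
    rw [h5]
    have := h4.neg
    rw [intervalIntegral.integral_symm, neg_neg,
      intervalIntegral.integral_of_le hax.le] at this
    exact this
  have htend : Tendsto (fun y => L x + ∫ v in y..x, F v) (nhdsWithin a (Ioi a))
      (nhds (L x + ∫ v in Ioc a x, F v)) := htend2.const_add _
  have hLx : (0 : ℝ) = L x + ∫ v in Ioc a x, F v := by
    refine tendsto_nhds_unique ?_ htend
    apply hLlim.congr'
    filter_upwards [Ioo_mem_nhdsGT_of_mem ⟨le_refl a, hax⟩] with y hy
    exact hkey y hy
  have hIooEq : (∫ v in Ioc a x, F v) = ∫ v in Ioo a x, F v :=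
    MeasureTheory.integral_Ioc_eq_integral_Ioo
  have hLxval : L x = -∫ v in Ioo a x, F v := by
    rw [← hIooEq]; linarith
  have hψ'x := hψ'pos x ⟨hax, hxb⟩
  have hS'x := hS'pos x ⟨hax, hxb⟩
  have : g x - ψ x * g' x / ψ' x = (S' x / ψ' x) * L x := by
    rw [hLdef]
    field_simp
  rw [this, hLxval]
  ring
end
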